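/- On a finite-dimensional normed space ℝⁿ, every strongly positive bounded linear operator with respect to a k-cone C is strongly focusing with respect to C: there exists κ > 0 such that every unit vector in R(C) has distance at least κ from the complement of C. -/

import Mathlib

open Pointwise


/-- On a finite-dimensional space, every strongly positive linear operator with
respect to a `k`-cone `C` is strongly focusing with respect to `C`: there exists
`κ > 0` such that every unit vector in `R '' C` has distance at least `κ` from
the complement of `C`. -/
theorem strongly_positive_is_strongly_focusing_findim
    {n : ℕ} (C : Set (EuclideanSpace ℝ (Fin n))) (k : ℕ)
    (hCcl : IsClosed C)
    (hCcone : ∀ l : ℝ, ∀ v ∈ C, l • v ∈ C)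
    (hrank₁ : ∃ W : Submodule ℝ (EuclideanSpace ℝ (Fin n)),
        Module.finrank ℝ W = k ∧ (W : Set (EuclideanSpace ℝ (Fin n))) ⊆ C)
    (hrank₂ : ∀ W : Submodule ℝ (EuclideanSpace ℝ (Fin n)),
        (W : Set (EuclideanSpace ℝ (Fin n))) ⊆ C → Module.finrank ℝ W ≤ k)
    (hCproper : C ≠ Set.univ)
    (R : EuclideanSpace ℝ (Fin n) →ₗ[ℝ] EuclideanSpace ℝ (Fin n))
    (hpos : ∀ v ∈ C, v ≠ 0 → R v ∈ interior C) :
    ∃ κ > 0, ∀ v ∈ R '' C, ‖v‖ = 1 → κ ≤ Metric.infDist v Cᶜ := by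
  classical
  have hne : (Cᶜ).Nonempty := Set.nonempty_compl.mpr hCproper
  -- 0 is not in the interior of C
  have h0 : (0 : EuclideanSpace ℝ (Fin n)) ∉ interior C := by
    intro h0
    apply hCproper
    ext v
    simp only [Set.mem_univ, iff_true]
    rcases Metric.isOpen_iff.mp isOpen_interior 0 h0 with ⟨ε, hε, hball⟩
    by_cases hv : v = 0
    · subst hv; exact interior_subset h0
    · have hvn : (0:ℝ) < ‖v‖ := norm_pos_iff.mpr hv
      have hεv : (ε / (2 * ‖v‖)) • v ∈ C := by
        apply interior_subset; apply hball
        have : ‖(ε / (2 * ‖v‖)) • v‖ = ε / 2 := by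
          rw [norm_smul, Real.norm_eq_abs,
            abs_of_pos (by positivity : (0:ℝ) < ε / (2 * ‖v‖))]
          field_simp
        simp [mem_ball_iff_norm, this]
        linarith
      have := hCcone (2 * ‖v‖ / ε) _ hεv
      rwa [smul_smul, div_mul_div_comm, mul_comm,
        div_self (by positivity), one_smul] at this
  -- interior of C is invariant under positive scaling
  have hint_smul : ∀ c : ℝ, 0 < c → ∀ v ∈ interior C, c • v ∈ interior C := by
    intro c hc v hv
    have hopen : IsOpen (c • interior C) := isOpen_interior.smul₀ (ne_of_gt hc)
    have hsub : c • interior C ⊆ C := by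
      rintro _ ⟨x, hx, rfl⟩
      exact hCcone c x (interior_subset hx)
    exact interior_maximal hsub hopen ⟨v, hv, rfl⟩
  -- positivity of infDist on the interior
  have hpos_dist : ∀ v ∈ interior C, 0 < Metric.infDist v Cᶜ := by
    intro v hv
    rcases Metric.isOpen_iff.mp isOpen_interior v hv with ⟨r, hr, hball⟩
    by_contra h
    push_neg at h
    have h0' : Metric.infDist v Cᶜ = 0 := le_antisymm h Metric.infDist_nonneg
    have hlt : Metric.infDist v Cᶜ < r := by rw [h0']; exact hr
    obtain ⟨y, hy, hdy⟩ := (Metric.infDist_lt_iff hne).mp hlt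
    exact hy (interior_subset (hball (by rwa [Metric.mem_ball, dist_comm])))
  set K : Set (EuclideanSpace ℝ (Fin n)) :=
    C ∩ Metric.sphere (0 : EuclideanSpace ℝ (Fin n)) 1 with hKdef
  have hRcont : Continuous R := R.continuous_of_finiteDimensional
  have hKmem : ∀ w ∈ K, w ∈ C ∧ ‖w‖ = 1 := by
    intro w hw
    refine ⟨hw.1, ?_⟩
    simpa using hw.2
  have hRne : ∀ w ∈ K, R w ≠ 0 := by
    intro w hw
    obtain ⟨hwC, hwn⟩ := hKmem w hw
    have hw0 : w ≠ 0 := by intro h; rw [h] at hwn; simp at hwn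
    intro h
    exact h0 (h ▸ hpos w hwC hw0)
  by_cases hKe : K = ∅
  · refine ⟨1, one_pos, ?_⟩
    rintro v ⟨w, hwC, rfl⟩ hvn
    exfalso
    have hw0 : w ≠ 0 := by
      intro h; rw [h] at hvn; simp at hvn
    have hwn : (0:ℝ) < ‖w‖ := norm_pos_iff.mpr hw0
    have : ‖w‖⁻¹ • w ∈ K := by
      constructor
      · exact hCcone _ _ hwC
      · simp [norm_smul, abs_of_pos (inv_pos.mpr hwn), inv_mul_cancel₀ (ne_of_gt hwn)]
    rw [hKe] at this; exact this
  · have hKne : K.Nonempty := Set.nonempty_iff_ne_empty.mpr hKe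
    have hKcp : IsCompact K := (isCompact_sphere 0 1).inter_left hCcl
    set f : EuclideanSpace ℝ (Fin n) → EuclideanSpace ℝ (Fin n) :=
      fun w => ‖R w‖⁻¹ • R w with hfdef
    have hfcont : ContinuousOn f K := by
      refine ContinuousOn.smul (f := fun w => ‖R w‖⁻¹) (g := fun w => R w) ?_ ?_
      · exact ContinuousOn.inv₀ hRcont.norm.continuousOn
          (fun w hw => norm_ne_zero_iff.mpr (hRne w hw))
      · exact hRcont.continuousOn
    have hfmem : ∀ w ∈ K, f w ∈ interior C := by
      intro w hw
      obtain ⟨hwC, hwn⟩ := hKmem w hw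
      have hw0 : w ≠ 0 := by intro h; rw [h] at hwn; simp at hwn
      exact hint_smul _ (inv_pos.mpr (norm_pos_iff.mpr (hRne w hw))) _ (hpos w hwC hw0)
    set S := f '' K with hSdef
    have hScp : IsCompact S := hKcp.image_of_continuousOn hfcont
    have hSne : S.Nonempty := hKne.image f
    obtain ⟨v₀, hv₀S, hv₀min⟩ := hScp.exists_isMinOn hSne
      ((Metric.continuous_infDist_pt Cᶜ).continuousOn)
    refine ⟨Metric.infDist v₀ Cᶜ, ?_, ?_⟩
    · obtain ⟨w, hwK, rfl⟩ := hv₀S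
      exact hpos_dist _ (hfmem w hwK)
    · rintro v ⟨w, hwC, rfl⟩ hvn
      have hw0 : w ≠ 0 := by
        intro h; rw [h] at hvn; simp at hvn
      have hwn : (0:ℝ) < ‖w‖ := norm_pos_iff.mpr hw0
      have huK : ‖w‖⁻¹ • w ∈ K := by
        constructor
        · exact hCcone _ _ hwC
        · simp [norm_smul, abs_of_pos (inv_pos.mpr hwn), inv_mul_cancel₀ (ne_of_gt hwn)]
      have hfu : f (‖w‖⁻¹ • w) = R w := by
        have hRu : R (‖w‖⁻¹ • w) = ‖w‖⁻¹ • R w := by simp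
        rw [hfdef]
        simp only [hRu, norm_smul, Real.norm_eq_abs,
          abs_of_pos (inv_pos.mpr hwn), hvn, mul_one, inv_inv, smul_smul,
          mul_inv_cancel₀ (ne_of_gt hwn), one_smul]
      have : R w ∈ S := ⟨_, huK, hfu⟩
      exact hv₀min this
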